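/- For monomials m_1,...,m_s in a skew polynomial ring and any monomial u, the twisted skew Taylor complex T̃(m_1,...,m_s; u), with free modules R^(s choose i) on basis e(σ; u) for σ ⊆ [s], |σ| = i, and differential ∂(e(σ;u)) = Σ_{i∈σ} e(σ\{i}; u)·(-1)^{α(σ;i)}·C(m_{σ\{i}} * u, m_σ/m_{σ\{i}})^{-1}·(m_σ/m_{σ\{i}}), is isomorphic as a complex of R-modules to the untwisted skew Taylor complex T(m_1,...,m_s) = T̃(m_1,...,m_s; 1), via the chain isomorphism φ(e_σ) = C(u, m_σ)·e(σ; u). -/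
import Mathlib


open Finset

/-- Bundled data of a skew polynomial ring `k_q[x_1,...,x_n]`: an algebra `R` over `k`
with quantum parameters `q`, skew-commuting variables `x i`, a linearly independent
family of sorted monomials `x^a = x_1^{a_1} ⋯ x_n^{a_n}`, and the bicharacter `C`
defined by the equation `x^a · x^b = C(a,b) • x^(a+b)`. -/
structure SkewPoly (k : Type) [Field k] (n : ℕ) (R : Type) [Ring R] [Algebra k R] : Type where
  q : Fin n → Fin n → kˣ
  q_symm : ∀ i j, q j i = (q i j)⁻¹
  q_diag : ∀ i, q i i = 1
  x : Fin n → R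
  x_comm : ∀ i j, x i * x j = ((q i j : kˣ) : k) • (x j * x i)
  C : (Fin n → ℕ) → (Fin n → ℕ) → kˣ
  C_spec : ∀ a b : Fin n → ℕ,
    (((List.finRange n).map fun i => x i ^ a i).prod) *
      (((List.finRange n).map fun i => x i ^ b i).prod) =
      ((C a b : kˣ) : k) • (((List.finRange n).map fun i => x i ^ (a i + b i)).prod)
  linInd : LinearIndependent k
    (fun a : Fin n → ℕ => (((List.finRange n).map fun i => x i ^ a i).prod))

/-- The sorted monomial `x^a = x_1^{a_1} ⋯ x_n^{a_n}`. -/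
def SkewPoly.mono {k : Type} [Field k] {n : ℕ} {R : Type} [Ring R] [Algebra k R]
    (S : SkewPoly k n R) (a : Fin n → ℕ) : R :=
  ((List.finRange n).map fun i => S.x i ^ a i).prod

/-- Exponent vector of the least common multiple `m_σ` of the monomials `m i`, `i ∈ σ`. -/
def lcmE {n s : ℕ} (m : Fin s → Fin n → ℕ) (σ : Finset (Fin s)) : Fin n → ℕ :=
  fun t => σ.sup fun i => m i t

/-- Total differential of the skew Taylor complex of `m_1,…,m_s` twisted by the monomial `x^u`,
acting on coordinates with respect to the basis `e(σ;u)`, `σ ⊆ [s]` (the untwisted complex is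
the case `u = 0`):
`∂(e(σ;u)) = Σ_{i∈σ} e(σ\{i};u)·(-1)^{α(σ;i)}·C(m_{σ\{i}} * u, m_σ/m_{σ\{i}})⁻¹·(m_σ/m_{σ\{i}})`. -/
noncomputable def taylorD {k : Type} [Field k] {n : ℕ} {R : Type} [Ring R] [Algebra k R]
    {s : ℕ} (S : SkewPoly k n R) (m : Fin s → Fin n → ℕ) (u : Fin n → ℕ)
    (f : Finset (Fin s) → R) : Finset (Fin s) → R :=
  fun τ => ∑ i ∈ τᶜ,
    (-1 : R) ^ ((τ.filter (· < i)).card) *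
      algebraMap k R (((S.C (lcmE m τ + u) (lcmE m (insert i τ) - lcmE m τ))⁻¹ : kˣ) : k) *
      S.mono (lcmE m (insert i τ) - lcmE m τ) * f (insert i τ)

section Aux

variable {k : Type} [Field k] {n : ℕ} {R : Type} [Ring R] [Algebra k R]

lemma SkewPoly.mono_mul (S : SkewPoly k n R) (a b : Fin n → ℕ) :
    S.mono a * S.mono b = ((S.C a b : kˣ) : k) • S.mono (a + b) :=
  S.C_spec a b

lemma SkewPoly.mono_ne_zero (S : SkewPoly k n R) (a : Fin n → ℕ) : S.mono a ≠ 0 :=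
  S.linInd.ne_zero a

lemma SkewPoly.smul_mono_cancel (S : SkewPoly k n R) (a : Fin n → ℕ) {c c' : k}
    (h : c • S.mono a = c' • S.mono a) : c = c' := by
  by_contra hne
  have h0 : (c - c') • S.mono a = 0 := by rw [sub_smul, h, sub_self]
  have hc : c - c' ≠ 0 := sub_ne_zero.mpr hne
  have := congrArg (fun z => (c - c')⁻¹ • z) h0
  simp only [smul_smul, inv_mul_cancel₀ hc, one_smul, smul_zero] at this
  exact S.mono_ne_zero a this

/-- The 2-cocycle identity for `C`. -/
lemma central_helper {c1 c2 c3 c4 : k} (h : c1 * c2 = c3 * c4) (e : ℕ) (x y : R) :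
    c1 • ((-1 : R) ^ e * algebraMap k R c2 * x * y)
      = (-1 : R) ^ e * algebraMap k R c3 * x * (c4 • y) := by
  simp only [Algebra.algebraMap_eq_smul_one, mul_smul_comm, smul_mul_assoc, smul_smul,
    mul_one]
  rw [h, mul_comm c3 c4]

lemma SkewPoly.C_cocycle (S : SkewPoly k n R) (a b c : Fin n → ℕ) :
    S.C a b * S.C (a + b) c = S.C b c * S.C a (b + c) := by
  have h1 : (S.mono a * S.mono b) * S.mono c
      = (((S.C a b * S.C (a + b) c : kˣ) : k)) • S.mono (a + b + c) := by
    rw [S.mono_mul a b, smul_mul_assoc, S.mono_mul (a + b) c, Units.val_mul, mul_smul]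
  have h2 : S.mono a * (S.mono b * S.mono c)
      = (((S.C b c * S.C a (b + c) : kˣ) : k)) • S.mono (a + b + c) := by
    rw [S.mono_mul b c, mul_smul_comm, S.mono_mul a (b + c), Units.val_mul, mul_smul,
      add_assoc]
  have := S.smul_mono_cancel (a + b + c) (h1 ▸ h2 ▸ (mul_assoc (S.mono a) (S.mono b) (S.mono c)))
  exact Units.ext this

end Aux

/-- the twisted skew Taylor complex `T̃(m_1,…,m_s; u)` is isomorphic to the
untwisted one `T(m_1,…,m_s) = T̃(m_1,…,m_s; 1)` via the chain isomorphism
`φ(e_σ) = C(u, m_σ)·e(σ;u)`. -/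
theorem twisted_taylor_iso {k : Type} [Field k] {n : ℕ} {R : Type} [Ring R] [Algebra k R]
    {s : ℕ} (S : SkewPoly k n R) (m : Fin s → Fin n → ℕ) (u : Fin n → ℕ) :
    Function.Bijective
      (fun (f : Finset (Fin s) → R) => fun σ => ((S.C u (lcmE m σ) : kˣ) : k) • f σ) ∧
    ∀ f : Finset (Fin s) → R,
      (fun σ => ((S.C u (lcmE m σ) : kˣ) : k) • taylorD S m 0 f σ) =
        taylorD S m u (fun σ => ((S.C u (lcmE m σ) : kˣ) : k) • f σ) := by
  constructor
  · apply Function.bijective_iff_has_inverse.mpr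
    refine ⟨fun g σ => (((S.C u (lcmE m σ))⁻¹ : kˣ) : k) • g σ, ?_, ?_⟩
    · intro f; funext σ
      simp [smul_smul, ← Units.val_mul]
    · intro g; funext σ
      simp [smul_smul, ← Units.val_mul]
  · intro f
    funext τ
    simp only [taylorD, Finset.smul_sum]
    refine Finset.sum_congr rfl fun i _ => ?_
    set A := lcmE m τ with hA
    set d := lcmE m (insert i τ) - lcmE m τ with hd
    have hAd : lcmE m (insert i τ) = A + d := by
      funext t
      have h : A t ≤ lcmE m (insert i τ) t :=
        Finset.sup_mono (Finset.subset_insert i τ)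
      simp only [hA, hd, Pi.add_apply, Pi.sub_apply] at h ⊢
      omega
    rw [hAd, add_zero]
    have hc := S.C_cocycle u A d
    rw [add_comm u A] at hc
    have hck : ((S.C u A : kˣ) : k) * ((S.C (A + u) d : kˣ) : k)
        = ((S.C A d : kˣ) : k) * ((S.C u (A + d) : kˣ) : k) := by
      rw [← Units.val_mul, ← Units.val_mul, hc]
    have key : ((S.C u A : kˣ) : k) * (((S.C A d)⁻¹ : kˣ) : k)
        = (((S.C (A + u) d)⁻¹ : kˣ) : k) * ((S.C u (A + d) : kˣ) : k) := by
      rw [Units.val_inv_eq_inv_val, Units.val_inv_eq_inv_val]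
      field_simp
      linear_combination hck
    exact central_helper key _ _ _
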